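/- Let N = k·2^n + 1 with k odd and k < 2^n, n ≥ 1. Let a be an integer with gcd(a²−1, N) = 1 and suppose that in F_p[√(a²−1)] for every prime p dividing N, ω = a + √(a²−1) satisfies ω^((N−1)/2) ≡ −1 (mod N) (equivalently T_{k·2^{n−1}}(a) ≡ −1 and U_{k·2^{n−1}−1}(a) ≡ 0 mod N). Then N is prime. -/

import Mathlib

open Polynomial Polynomial.Chebyshev

lemma evalT_hom {S S' : Type*} [CommRing S] [CommRing S'] (g : S →+* S') (x : S) (j : ℤ) :
    (T S' j).eval (g x) = g ((T S j).eval x) := by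
  rw [← map_T g j, eval_map, eval₂_at_apply]

lemma evalU_hom {S S' : Type*} [CommRing S] [CommRing S'] (g : S →+* S') (x : S) (j : ℤ) :
    (U S' j).eval (g x) = g ((U S j).eval x) := by
  rw [← map_U g j, eval_map, eval₂_at_apply]

lemma omega_pow {S : Type*} [CommRing S] (x r : S) (h : r ^ 2 = x ^ 2 - 1) (j : ℕ) :
    (x + r) ^ j = (T S j).eval x + (U S ((j : ℤ) - 1)).eval x * r := by
  induction j with
  | zero => simp
  | succ j ih =>
      have h1 := T_eq_X_mul_T_sub_pol_U S ((j : ℤ) - 1)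
      have h2 := U_eq_X_mul_U_add_T S ((j : ℤ) - 1)
      have e1 : ((j : ℤ) - 1) + 2 = (j : ℤ) + 1 := by ring
      have e2 : ((j : ℤ) - 1) + 1 = (j : ℤ) := by ring
      rw [e1, e2] at h1
      rw [e2] at h2
      have e3 : ((j + 1 : ℕ) : ℤ) = (j : ℤ) + 1 := by push_cast; ring
      have e4 : (j : ℤ) + 1 - 1 = (j : ℤ) := by ring
      rw [e3, e4, pow_succ, ih]
      have f1 := congrArg (Polynomial.eval x) h1
      have f2 := congrArg (Polynomial.eval x) h2
      simp only [eval_mul, eval_sub, eval_add, eval_X, eval_one, eval_pow] at f1 f2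
      linear_combination (-1 : S) * f1 - r * f2 + ((U S ((j:ℤ) - 1)).eval x) * h

lemma two_pow_dvd_order {o k n : ℕ} (hk : Odd k) (h1 : o ∣ k * 2 ^ (n + 1))
    (h2 : ¬ o ∣ k * 2 ^ n) : 2 ^ (n + 1) ∣ o := by
  have hk0 : k ≠ 0 := by rintro rfl; simp at hk
  have ho : o ≠ 0 := by
    rintro rfl
    have := zero_dvd_iff.mp h1
    simp [hk0] at this
  set v := o.factorization 2 with hv
  set t := o / 2 ^ v with ht
  have hvt : 2 ^ v * t = o := Nat.ordProj_mul_ordCompl_eq_self o 2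
  have ht2 : ¬ 2 ∣ t := Nat.not_dvd_ordCompl Nat.prime_two ho
  have htk : t ∣ k := by
    have htd : t ∣ k * 2 ^ (n + 1) := dvd_trans (Dvd.intro_left _ hvt) h1
    exact (Nat.Coprime.pow_right _ (Nat.coprime_two_right.mpr
      (Nat.odd_iff.mpr (Nat.two_dvd_ne_zero.mp ht2)))).dvd_of_dvd_mul_right htd
  rcases le_or_gt (n + 1) v with hnv | hnv
  · exact dvd_trans (pow_dvd_pow 2 hnv) (Dvd.intro _ hvt)
  · exfalso
    apply h2
    calc o = 2 ^ v * t := hvt.symm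
    _ ∣ 2 ^ n * k := mul_dvd_mul (pow_dvd_pow 2 (by omega)) htk
    _ = k * 2 ^ n := mul_comm _ _

lemma prime_factor_bound (k n : ℕ) (hk : Odd k) (hkn : k < 2 ^ n) (hn : 1 ≤ n)
    (N : ℕ) (hN : N = k * 2 ^ n + 1)
    (a : ℤ) (hcop : IsCoprime (a ^ 2 - 1) (N : ℤ))
    (hT : (T ℤ ((k : ℤ) * 2 ^ (n - 1))).eval a ≡ -1 [ZMOD N])
    (hU : (U ℤ ((k : ℤ) * 2 ^ (n - 1) - 1)).eval a ≡ 0 [ZMOD N])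
    (p : ℕ) (hp : p.Prime) (hpd : p ∣ N) : 2 ^ n + 1 ≤ p := by
  obtain ⟨n', rfl⟩ : ∃ n', n = n' + 1 := ⟨n - 1, by omega⟩
  simp only [Nat.add_sub_cancel] at hT hU
  haveI : Fact p.Prime := ⟨hp⟩
  have hk0 : 0 < k := hk.pos
  have hpodd : p ≠ 2 := by
    rintro rfl
    have h1 : (2 : ℕ) ∣ k * 2 ^ (n' + 1) + 1 := hN ▸ hpd
    have h2 : (2 : ℕ) ∣ k * 2 ^ (n' + 1) :=
      Dvd.dvd.mul_left (dvd_pow_self 2 (by omega)) k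
    omega
  have hp3 : 3 ≤ p := by
    have := hp.two_le
    omega
  -- the quantity m
  set m : ℕ := k * 2 ^ n' with hmdef
  have hm : (m : ℤ) = (k : ℤ) * 2 ^ n' := by rw [hmdef]; push_cast; ring
  have hm0 : 0 < m := by positivity
  -- move hypotheses mod p
  have hpdZ : (p : ℤ) ∣ (N : ℤ) := Int.natCast_dvd_natCast.mpr hpd
  have hTp : (((T ℤ (m : ℤ)).eval a : ℤ) : ZMod p) = -1 := by
    have := (hT.of_dvd hpdZ)
    rw [← hm] at this
    have h2 := (ZMod.intCast_eq_intCast_iff _ _ _).mpr this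
    push_cast at h2
    exact h2
  have hUp : (((U ℤ ((m : ℤ) - 1)).eval a : ℤ) : ZMod p) = 0 := by
    have := (hU.of_dvd hpdZ)
    rw [← hm] at this
    have h2 := (ZMod.intCast_eq_intCast_iff _ _ _).mpr this
    push_cast at h2
    exact h2
  -- set up the quadratic extension
  set b : ZMod p := (a : ZMod p) with hb
  set d : ZMod p := b ^ 2 - 1 with hd
  have hTb : (T (ZMod p) (m : ℤ)).eval b = -1 := by
    rw [hb, show ((a : ℤ) : ZMod p) = (Int.castRingHom (ZMod p)) a from rfl,
      evalT_hom (Int.castRingHom (ZMod p)) a (m : ℤ)]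
    exact hTp
  have hUb : (U (ZMod p) ((m : ℤ) - 1)).eval b = 0 := by
    rw [hb, show ((a : ℤ) : ZMod p) = (Int.castRingHom (ZMod p)) a from rfl,
      evalU_hom (Int.castRingHom (ZMod p)) a _]
    exact hUp
  have hd0 : d ≠ 0 := by
    intro h0
    obtain ⟨u, v, huv⟩ := hcop
    have := congrArg (fun z : ℤ => (z : ZMod p)) huv
    push_cast at this
    rw [(CharP.cast_eq_zero_iff (ZMod p) p N).mpr hpd] at this
    rw [hd, hb] at h0
    rw [show ((a : ℤ) : ZMod p) ^ 2 - 1 = 0 from h0] at this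
    simp at this
  set f : (ZMod p)[X] := X ^ 2 - C d with hf
  have hfdeg : f.degree ≠ 0 := by
    rw [hf, Polynomial.degree_X_pow_sub_C (by norm_num)]
    norm_num
  haveI : Nontrivial (AdjoinRoot f) := AdjoinRoot.nontrivial f hfdeg
  haveI : CharP (AdjoinRoot f) p := by
    have : algebraMap (ZMod p) (AdjoinRoot f) = AdjoinRoot.of f := rfl
    exact charP_of_injective_algebraMap' (A := AdjoinRoot f) (ZMod p) p
  set og : ZMod p →+* AdjoinRoot f := AdjoinRoot.of f with hog
  set r : AdjoinRoot f := AdjoinRoot.root f with hr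
  have hr2 : r ^ 2 = og d := by
    have h0 : (X ^ 2 - C d).eval₂ og r = 0 := by
      rw [← hf]; exact AdjoinRoot.eval₂_root f
    rw [eval₂_sub, eval₂_X_pow, eval₂_C, sub_eq_zero] at h0
    exact h0
  have hr2' : r ^ 2 = (og b) ^ 2 - 1 := by
    rw [hr2, hd, map_sub, map_pow, map_one]
  set ω : AdjoinRoot f := og b + r with hω
  set ω' : AdjoinRoot f := og b - r with hω'
  have hinv : ω * ω' = 1 := by
    rw [hω, hω']
    have : (og b + r) * (og b - r) = (og b) ^ 2 - r ^ 2 := by ring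
    rw [this, hr2', ]
    ring
  set u : (AdjoinRoot f)ˣ := ⟨ω, ω', hinv, by rw [mul_comm]; exact hinv⟩ with hu
  -- u ^ m = -1
  have hωm : ω ^ m = -1 := by
    rw [hω, omega_pow (og b) r hr2' m, evalT_hom og b (m : ℤ), evalU_hom og b ((m : ℤ) - 1),
      hTb, hUb, map_zero, zero_mul, add_zero, map_neg, map_one]
  have hum : u ^ m = -1 := by
    apply Units.ext
    rw [Units.val_pow_eq_pow_val]
    simpa using hωm
  have hne : (-1 : (AdjoinRoot f)ˣ) ≠ 1 := by
    intro h
    have h1 : ((-1 : (AdjoinRoot f)ˣ) : AdjoinRoot f) = 1 := by rw [h]; rfl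
    rw [Units.val_neg, Units.val_one] at h1
    have h2 : ((2 : ℕ) : AdjoinRoot f) = 0 := by push_cast; linear_combination -h1
    have := (CharP.cast_eq_zero_iff (AdjoinRoot f) p 2).mp h2
    have := Nat.le_of_dvd (by norm_num) this
    omega
  have hu2m : u ^ (k * 2 ^ (n' + 1)) = 1 := by
    have : k * 2 ^ (n' + 1) = m * 2 := by rw [hmdef]; ring
    rw [this, pow_mul, hum]
    simp
  have hord1 : orderOf u ∣ k * 2 ^ (n' + 1) := orderOf_dvd_of_pow_eq_one hu2m
  have hord2 : ¬ orderOf u ∣ m := by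
    intro hdd
    exact hne ((orderOf_dvd_iff_pow_eq_one.mp hdd) ▸ hum.symm)
  have h2ord : 2 ^ (n' + 1) ∣ orderOf u := two_pow_dvd_order hk hord1 hord2
  -- Frobenius
  obtain ⟨q, hq⟩ : ∃ q, p = 2 * q + 1 := by
    have := hp.eq_one_or_self_of_dvd 2
    refine ⟨p / 2, ?_⟩
    omega
  have hrp : r ^ p = og (d ^ q) * r := by
    have e : r ^ p = r ^ (2 * q + 1) := congrArg (fun t => r ^ t) hq
    rw [e, pow_succ, pow_mul, hr2, map_pow]
  have heuler : d ^ q = 1 ∨ d ^ q = -1 := by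
    rw [← mul_self_eq_one_iff]
    rw [← pow_add]
    have : q + q = p - 1 := by omega
    rw [this]
    exact ZMod.pow_card_sub_one_eq_one hd0
  have hfrob : ω ^ p = og b + og (d ^ q) * r := by
    rw [hω, add_pow_char, ← map_pow, ZMod.pow_card, hrp]
  rcases heuler with he | he
  · -- d is a square: ω^p = ω, so order divides p - 1
    have hωp : ω ^ p = ω := by rw [hfrob, he, map_one, one_mul, hω]
    have hup : u ^ (p - 1) = 1 := by
      have h1 : u ^ p = u := by
        apply Units.ext
        rw [Units.val_pow_eq_pow_val]
        exact hωp
      have h2 : u ^ (p - 1) * u = 1 * u := by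
        rw [← pow_succ, one_mul, show p - 1 + 1 = p by omega, h1]
      exact mul_right_cancel h2
    have hdvd : 2 ^ (n' + 1) ∣ p - 1 := h2ord.trans (orderOf_dvd_of_pow_eq_one hup)
    have := Nat.le_of_dvd (by omega) hdvd
    omega
  · -- d is a non-square: ω^p = ω', so order divides p + 1
    have hωp : ω ^ (p + 1) = 1 := by
      rw [pow_succ, hfrob, he]
      have : og b + og (-1 : ZMod p) * r = ω' := by rw [hω', map_neg, map_one]; ring
      rw [this, mul_comm]
      exact hinv
    have hup : u ^ (p + 1) = 1 := by
      apply Units.ext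
      rw [Units.val_pow_eq_pow_val]
      simpa using hωp
    have hdvd : 2 ^ (n' + 1) ∣ p + 1 := h2ord.trans (orderOf_dvd_of_pow_eq_one hup)
    have hle : 2 ^ (n' + 1) ≤ p + 1 := Nat.le_of_dvd (by omega) hdvd
    rcases eq_or_lt_of_le hle with heq | hlt
    · -- p + 1 = 2 ^ (n' + 1): show impossible
      exfalso
      -- p ∣ k + 1
      have hNp : N = k * p + (k + 1) := by rw [hN, heq]; ring
      have hdk : p ∣ k + 1 := by
        have : p ∣ k * p + (k + 1) := hNp ▸ hpd
        exact (Nat.dvd_add_right (Dvd.intro_left k rfl)).mp this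
      have hkp : p ≤ k + 1 := Nat.le_of_dvd (by omega) hdk
      have hkub : k + 1 ≤ 2 ^ (n' + 1) := hkn
      -- k + 1 = p or p + 1
      rcases Nat.lt_or_ge (k + 1) (p + 1) with h1 | h1
      · have : k + 1 = p := by omega
        -- then k = p - 1 = 2q even, contradicting odd
        have hkeven : k = 2 * q := by omega
        rw [Nat.odd_iff] at hk
        omega
      · have : k + 1 = p + 1 := by omega
        have : p ∣ p + 1 := this ▸ hdk
        have : p ∣ 1 := (Nat.dvd_add_right dvd_rfl).mp this
        have := Nat.le_of_dvd (by norm_num) this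
        omega
    · -- p + 1 > 2 ^ (n' + 1): then p + 1 ≥ 2 ^ (n' + 2)
      obtain ⟨c, hc⟩ := hdvd
      have hc2 : 2 ≤ c := by
        rcases Nat.lt_or_ge c 2 with h | h
        · interval_cases c <;> omega
        · exact h
      have h2n : 2 ≤ 2 ^ (n' + 1) := by
        have : 2 ^ 1 ≤ 2 ^ (n' + 1) := Nat.pow_le_pow_right (by norm_num) (by omega)
        simpa using this
      have : 2 ^ (n' + 1) * 2 ≤ p + 1 := by
        rw [hc]
        exact Nat.mul_le_mul_left _ hc2
      omega


theorem chebyshev_proth (k n : ℕ) (hk : Odd k) (hkn : k < 2 ^ n) (hn : 1 ≤ n)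
    (N : ℕ) (hN : N = k * 2 ^ n + 1)
    (a : ℤ) (hcop : IsCoprime (a ^ 2 - 1) (N : ℤ))
    (hT : (T ℤ ((k : ℤ) * 2 ^ (n - 1))).eval a ≡ -1 [ZMOD N])
    (hU : (U ℤ ((k : ℤ) * 2 ^ (n - 1) - 1)).eval a ≡ 0 [ZMOD N]) :
    N.Prime := by
  have hk0 : 0 < k := hk.pos
  have h2n : 2 ≤ 2 ^ n := by
    have : 2 ^ 1 ≤ 2 ^ n := Nat.pow_le_pow_right (by norm_num) hn
    simpa using this
  have hN2 : 2 ≤ N := by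
    have h1 : 2 ≤ k * 2 ^ n := le_trans h2n (Nat.le_mul_of_pos_left _ hk0)
    omega
  by_contra hnp
  have hp := Nat.minFac_prime (show N ≠ 1 by omega)
  have hsq := Nat.minFac_sq_le_self (show 0 < N by omega) hnp
  have hbd := prime_factor_bound k n hk hkn hn N hN a hcop hT hU N.minFac hp (Nat.minFac_dvd N)
  have h1 : (2 ^ n + 1) ^ 2 ≤ N.minFac ^ 2 := Nat.pow_le_pow_left hbd 2
  have key : (2 ^ n + 1) ^ 2 ≤ k * 2 ^ n + 1 := hN ▸ le_trans h1 hsq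
  have hkx : k * 2 ^ n + 2 ^ n ≤ 2 ^ n * 2 ^ n := by
    calc k * 2 ^ n + 2 ^ n = (k + 1) * 2 ^ n := by ring
    _ ≤ 2 ^ n * 2 ^ n := Nat.mul_le_mul_right _ hkn
  have expand : (2 ^ n + 1) ^ 2 = 2 ^ n * 2 ^ n + 2 * 2 ^ n + 1 := by ring
  rw [expand] at key
  linarith
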